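/- arXiv:1712.02848 — 2 statements merged into one kernel-verified Lean document; each statement's English description precedes it below -/
import Mathlib

section
/- Let K be a complex Hilbert space, P an orthogonal projection on K, s_h(T) := S_h T S_h with S_h := h^{-1/2}(I − P) + P for h > 0, and let Q ∈ B(K). Suppose (Q_h)_{h>0} is a family in B(K) such that ‖s_h(Q_h) − Q‖ → 0 as h → 0. Then ‖s_h(exp(Q_h) − I) − F[Q]‖ → 0 as h → 0, where F[Q] := Q + Q·P·e₂(PQP)·P·Q is the Holevo transform of Q. -/
open ContinuousLinearMap Filter Topology

noncomputable section

/-- The operator `S_h = h^{-1/2}(I - P) + P`. -/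
def scaleOp {K : Type*} [NormedAddCommGroup K] [InnerProductSpace ℂ K]
    (P : K →L[ℂ] K) (h : ℝ) : K →L[ℂ] K :=
  ((Real.sqrt h : ℂ))⁻¹ • (1 - P) + P

/-- The scaling map `s_h(T) = S_h T S_h`. -/
def scal {K : Type*} [NormedAddCommGroup K] [InnerProductSpace ℂ K]
    (P : K →L[ℂ] K) (h : ℝ) (T : K →L[ℂ] K) : K →L[ℂ] K :=
  scaleOp P h * T * scaleOp P h

/-- `e₂(T) = ∑_{n≥0} Tⁿ/(n+2)!`. -/
def e2 {K : Type*} [NormedAddCommGroup K] [InnerProductSpace ℂ K]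
    (T : K →L[ℂ] K) : K →L[ℂ] K :=
  ∑' n : ℕ, (((n + 2).factorial : ℂ))⁻¹ • T ^ n

/-- The Holevo transform `F[Q] = Q + Q·P·e₂(PQP)·P·Q`. -/
def holevo {K : Type*} [NormedAddCommGroup K] [InnerProductSpace ℂ K]
    (P : K →L[ℂ] K) (Q : K →L[ℂ] K) : K →L[ℂ] K :=
  Q + Q * P * e2 (P * Q * P) * P * Q

section Aux
set_option linter.unusedSectionVars false

variable {K : Type*} [NormedAddCommGroup K] [InnerProductSpace ℂ K] [CompleteSpace K]

/-- `e₁(T) = ∑_{n≥0} Tⁿ/(n+1)!`. -/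
def e1 (T : K →L[ℂ] K) : K →L[ℂ] K := ∑' n : ℕ, (((n + 1).factorial : ℂ))⁻¹ • T ^ n

lemma norm_pow_le'' (T : K →L[ℂ] K) (n : ℕ) : ‖T ^ n‖ ≤ ‖T‖ ^ n := by
  cases n with
  | zero => rw [pow_zero, pow_zero]; exact ContinuousLinearMap.norm_id_le
  | succ n => exact norm_pow_le' T (Nat.succ_pos n)

lemma summable_aux (k : ℕ) (T : K →L[ℂ] K) :
    Summable fun n : ℕ => (((n + k).factorial : ℂ))⁻¹ • T ^ n := by
  apply Summable.of_norm_bounded (Real.summable_pow_div_factorial ‖T‖)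
  intro n
  rw [norm_smul]
  have h1 : ‖(((n + k).factorial : ℂ))⁻¹‖ ≤ ((n.factorial : ℝ))⁻¹ := by
    rw [norm_inv]
    apply inv_anti₀ (by positivity)
    simpa using (Nat.cast_le (α := ℝ)).mpr (Nat.factorial_le (Nat.le_add_right n k))
  calc ‖(((n + k).factorial : ℂ))⁻¹‖ * ‖T ^ n‖
      ≤ ((n.factorial : ℝ))⁻¹ * ‖T‖ ^ n := by
        apply mul_le_mul h1 (norm_pow_le'' T n) (norm_nonneg _) (by positivity)
    _ = ‖T‖ ^ n / n.factorial := by ring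

lemma exp_sub_one (T : K →L[ℂ] K) : NormedSpace.exp T - 1 = T * e1 T := by
  have hs : Summable fun n : ℕ => ((n.factorial : ℂ))⁻¹ • T ^ n := by
    simpa using summable_aux 0 T
  rw [NormedSpace.exp_eq_tsum ℂ]
  beta_reduce
  rw [hs.tsum_eq_zero_add]
  unfold e1
  rw [← (summable_aux 1 T).tsum_mul_left T]
  simp [mul_smul_comm, pow_succ']

variable (P Q : K →L[ℂ] K)

lemma prod_form (hP2 : P * P = P) (a b : ℂ) :
    (a • (1 - P) + P) * (b • (1 - P) + P) = (a * b) • (1 - P) + P := by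
  have h1 : (1 - P) * P = 0 := by rw [sub_mul, one_mul, hP2, sub_self]
  have h2 : P * (1 - P) = 0 := by rw [mul_sub, mul_one, hP2, sub_self]
  have h3 : (1 - P) * (1 - P) = 1 - P := by rw [mul_sub, mul_one, h1, sub_zero]
  simp [add_mul, mul_add, smul_mul_assoc, mul_smul_comm, smul_smul, h1, h2, h3, hP2,
    mul_comm a b]

lemma aux_pow (hP2 : P * P = P) (m : ℕ) :
    P * ((P * Q * P) ^ m * (P * Q)) = (P * Q) ^ (m + 1) := by
  have hP2' : ∀ X : K →L[ℂ] K, P * (P * X) = P * X := by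
    intro X; rw [← mul_assoc, hP2]
  induction m with
  | zero => simp [mul_assoc, hP2']
  | succ m ih =>
    rw [pow_succ']
    calc P * (P * Q * P * ((P * Q * P) ^ m * (P * Q)))
        = (P * Q) * (P * ((P * Q * P) ^ m * (P * Q))) := by
          simp only [mul_assoc, hP2']
      _ = (P * Q) ^ (m + 2) := by rw [ih, pow_succ' (P*Q) (m+1), pow_succ' (P*Q) m]

lemma holevo_eq (hP2 : P * P = P) :
    holevo P Q = Q * e1 (P * Q) := by
  have hsum1 : Summable fun n : ℕ => Q * ((((n + 1).factorial : ℂ))⁻¹ • (P * Q) ^ n) :=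
    (summable_aux 1 (P * Q)).mul_left Q
  have h1 : Q * e1 (P * Q)
      = Q + ∑' n : ℕ, (((n + 2).factorial : ℂ))⁻¹ • (Q * (P * Q) ^ (n + 1)) := by
    unfold e1
    rw [← (summable_aux 1 (P * Q)).tsum_mul_left Q, hsum1.tsum_eq_zero_add]
    simp [mul_smul_comm]
  have hsum2 : Summable fun n : ℕ => (((n + 2).factorial : ℂ))⁻¹ • (P * Q * P) ^ n :=
    summable_aux 2 _
  have h2 : Q * P * e2 (P * Q * P) * P * Q
      = ∑' n : ℕ, (((n + 2).factorial : ℂ))⁻¹ • (Q * (P * Q) ^ (n + 1)) := by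
    have e1' : Q * P * e2 (P * Q * P) * P * Q = (Q * P) * (e2 (P * Q * P) * (P * Q)) := by
      simp only [mul_assoc]
    rw [e1']
    unfold e2
    rw [← hsum2.tsum_mul_right (P * Q), ← (hsum2.mul_right (P * Q)).tsum_mul_left (Q * P)]
    apply tsum_congr
    intro n
    rw [smul_mul_assoc, mul_smul_comm]
    congr 1
    rw [mul_assoc, aux_pow P Q hP2 n]
  rw [holevo, h1, h2]

lemma key (S T R Qh : K →L[ℂ] K) (hST : S * T = 1) (hTS : T * S = 1)
    (hQ : Qh = T * R * T) :
    S * (NormedSpace.exp Qh - 1) * S = R * e1 ((T * T) * R) := by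
  have hSTx : ∀ X : K →L[ℂ] K, S * (T * X) = X := by
    intro X; rw [← mul_assoc, hST, one_mul]
  have hpow : ∀ n : ℕ, T * (T * R * T) ^ n * S = ((T * T) * R) ^ n := by
    intro n
    induction n with
    | zero => simp [hTS]
    | succ n ih =>
      rw [pow_succ' (T * R * T), pow_succ' ((T * T) * R), ← ih]
      simp only [mul_assoc]
  have h5 : T * e1 (T * R * T) * S = e1 ((T * T) * R) := by
    unfold e1
    rw [← (summable_aux 1 (T * R * T)).tsum_mul_left T,
      ← ((summable_aux 1 (T * R * T)).mul_left T).tsum_mul_right S]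
    apply tsum_congr
    intro n
    rw [mul_smul_comm, smul_mul_assoc]
    congr 1
    rw [← hpow n]
  rw [exp_sub_one, hQ, ← h5]
  simp only [mul_assoc, hSTx]

lemma e1_tendsto {α : Type*} {l : Filter α} {X : α → K →L[ℂ] K} {X₀ : K →L[ℂ] K}
    (hX : Tendsto X l (𝓝 X₀)) :
    Tendsto (fun a => e1 (X a)) l (𝓝 (e1 X₀)) := by
  set M : ℝ := ‖X₀‖ + 1 with hM
  have hMpos : 0 < M := by positivity
  have hcont : ContinuousOn (fun x : K →L[ℂ] K => e1 x) (Metric.closedBall 0 M) := by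
    unfold e1
    apply continuousOn_tsum (u := fun n : ℕ => M ^ n / n.factorial)
    · intro i
      exact ((continuous_const (y := (((i + 1).factorial : ℂ))⁻¹)).smul
        (continuous_pow (M := K →L[ℂ] K) i)).continuousOn
    · exact Real.summable_pow_div_factorial M
    · intro n x hx
      have hxM : ‖x‖ ≤ M := by simpa using hx
      rw [norm_smul]
      have hfac : ‖(((n + 1).factorial : ℂ))⁻¹‖ ≤ ((n.factorial : ℝ))⁻¹ := by
        rw [norm_inv]
        apply inv_anti₀ (by positivity)
        simpa using (Nat.cast_le (α := ℝ)).mpr (Nat.factorial_le (Nat.le_add_right n 1))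
      calc ‖(((n + 1).factorial : ℂ))⁻¹‖ * ‖x ^ n‖
          ≤ ((n.factorial : ℝ))⁻¹ * M ^ n := by
            apply mul_le_mul hfac ?_ (norm_nonneg _) (by positivity)
            exact le_trans (norm_pow_le'' x n) (pow_le_pow_left₀ (norm_nonneg x) hxM n)
        _ = M ^ n / n.factorial := by ring
  have hmem : ∀ᶠ a in l, X a ∈ Metric.closedBall 0 M := by
    apply hX
    apply Metric.closedBall_mem_nhds_of_mem
    simp [hM]
  have hcw : ContinuousWithinAt (fun x : K →L[ℂ] K => e1 x) (Metric.closedBall 0 M) X₀ :=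
    hcont X₀ (by simp [hM])
  exact hcw.tendsto.comp (tendsto_nhdsWithin_iff.mpr ⟨hX, hmem⟩)

end Aux

theorem scaled_exponentials_converge_to_holevo_transform
    {K : Type*} [NormedAddCommGroup K] [InnerProductSpace ℂ K] [CompleteSpace K]
    (P : K →L[ℂ] K) (hP : IsSelfAdjoint P) (hP2 : P * P = P)
    (Q : K →L[ℂ] K) (Qh : ℝ → K →L[ℂ] K)
    (hcgce : Tendsto (fun h : ℝ => ‖scal P h (Qh h) - Q‖) (𝓝[>] 0) (𝓝 0)) :
    Tendsto (fun h : ℝ => ‖scal P h (NormedSpace.exp (Qh h) - 1) - holevo P Q‖)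
      (𝓝[>] 0) (𝓝 0) := by
  set R : ℝ → K →L[ℂ] K := fun h => scal P h (Qh h) with hRdef
  set A : ℝ → K →L[ℂ] K := fun h => (h : ℂ) • (1 - P) + P with hAdef
  have hR : Tendsto R (𝓝[>] 0) (𝓝 Q) := tendsto_iff_norm_sub_tendsto_zero.mpr hcgce
  have hA : Tendsto A (𝓝[>] 0) (𝓝 P) := by
    have hc : Tendsto (fun h : ℝ => (h : ℂ)) (𝓝[>] (0 : ℝ)) (𝓝 0) := by
      simpa using (Complex.continuous_ofReal.tendsto 0).mono_left nhdsWithin_le_nhds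
    simpa [hAdef] using (hc.smul_const ((1 : K →L[ℂ] K) - P)).add_const P
  have hmain : Tendsto (fun h : ℝ => scal P h (NormedSpace.exp (Qh h) - 1))
      (𝓝[>] 0) (𝓝 (holevo P Q)) := by
    rw [holevo_eq P Q hP2]
    apply Tendsto.congr' _ (hR.mul (e1_tendsto (hA.mul hR)))
    filter_upwards [self_mem_nhdsWithin] with h hh
    have hpos : (0 : ℝ) < h := hh
    have hsq : (Real.sqrt h : ℂ) ≠ 0 := by
      simpa using (Real.sqrt_ne_zero'.mpr hpos)
    have hST : scaleOp P h * ((Real.sqrt h : ℂ) • (1 - P) + P) = 1 := by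
      rw [scaleOp, prod_form P hP2, inv_mul_cancel₀ hsq, one_smul, sub_add_cancel]
    have hTS : ((Real.sqrt h : ℂ) • (1 - P) + P) * scaleOp P h = 1 := by
      rw [scaleOp, prod_form P hP2, mul_inv_cancel₀ hsq, one_smul, sub_add_cancel]
    have hTT : ((Real.sqrt h : ℂ) • (1 - P) + P) * ((Real.sqrt h : ℂ) • (1 - P) + P)
        = A h := by
      rw [prod_form P hP2, hAdef]
      norm_cast
      rw [Real.mul_self_sqrt hpos.le]
    have hQ : Qh h = ((Real.sqrt h : ℂ) • (1 - P) + P) * R h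
        * ((Real.sqrt h : ℂ) • (1 - P) + P) := by
      have hTSx : ∀ X : K →L[ℂ] K,
          ((Real.sqrt h : ℂ) • (1 - P) + P) * (scaleOp P h * X) = X := by
        intro X; rw [← mul_assoc, hTS, one_mul]
      have hSTx : ∀ X : K →L[ℂ] K,
          scaleOp P h * (((Real.sqrt h : ℂ) • (1 - P) + P) * X) = X := by
        intro X; rw [← mul_assoc, hST, one_mul]
      rw [hRdef]
      simp only [scal, mul_assoc, hTSx]
      rw [← mul_assoc, mul_assoc, hST, mul_one]
    have := key (scaleOp P h) ((Real.sqrt h : ℂ) • (1 - P) + P) (R h) (Qh h) hST hTS hQ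
    rw [hTT] at this
    exact this.symm
  exact tendsto_iff_norm_sub_tendsto_zero.mp hmain
end
end

section
/- Let K be a complex Hilbert space, P an orthogonal projection on K, s_h(T) := S_h T S_h with S_h := h^{-1/2}(I − P) + P for h > 0. Suppose that for i = 1, 2 the families (Q_i(h))_{h>0} in B(K) and operators Q_i ∈ B(K) satisfy ‖s_h(Q_i(h)) − Q_i‖ → 0 as h → 0. Then ‖s_h(exp(Q₁(h) + Q₂(h)) − I) − F[Q₁ + Q₂]‖ → 0 and ‖s_h(exp(Q₁(h))·exp(Q₂(h)) − I) − F[Q₁] ◁ F[Q₂]‖ → 0 as h → 0, where F[Q] := Q + Q·P·e₂(PQP)·P·Q is the Holevo transform and F₁ ◁ F₂ := F₁ + F₂ + F₁ P F₂ is the series product. -/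
open ContinuousLinearMap Filter Topology

noncomputable section

/-- The series product `F₁ ◁ F₂ = F₁ + F₂ + F₁ P F₂`. -/
def seriesProd {K : Type*} [NormedAddCommGroup K] [InnerProductSpace ℂ K]
    (P : K →L[ℂ] K) (F₁ F₂ : K →L[ℂ] K) : K →L[ℂ] K :=
  F₁ + F₂ + F₁ * P * F₂

section Aux

variable {K : Type*} [NormedAddCommGroup K] [InnerProductSpace ℂ K] [CompleteSpace K]

/-- The inverse of `scaleOp P h`. -/
def scaleInv (P : K →L[ℂ] K) (h : ℝ) : K →L[ℂ] K :=
  ((Real.sqrt h : ℂ)) • (1 - P) + P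

lemma e2_summand_norm_le (T : K →L[ℂ] K) (n : ℕ) :
    ‖(((n + 2).factorial : ℂ))⁻¹ • T ^ n‖ ≤ ‖T‖ ^ n / n.factorial := by
  rw [norm_smul, norm_inv]
  have h1 : ‖((n + 2).factorial : ℂ)‖ = ((n + 2).factorial : ℝ) := by
    simp [Complex.norm_natCast]
  rw [h1]
  have h2 : ((n + 2).factorial : ℝ)⁻¹ ≤ ((n.factorial : ℝ))⁻¹ := by
    apply inv_anti₀
    · exact_mod_cast n.factorial_pos
    · exact_mod_cast Nat.factorial_le (by omega)
  have hTn : ‖T ^ n‖ ≤ ‖T‖ ^ n := by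
    cases n with
    | zero => simpa [ContinuousLinearMap.one_def] using ContinuousLinearMap.norm_id_le (E := K)
    | succ m => exact norm_pow_le' T m.succ_pos
  calc ((n + 2).factorial : ℝ)⁻¹ * ‖T ^ n‖
      ≤ ((n.factorial : ℝ))⁻¹ * ‖T‖ ^ n :=
        mul_le_mul h2 hTn (norm_nonneg _) (by positivity)
    _ = ‖T‖ ^ n / n.factorial := by ring

lemma e2_summable (T : K →L[ℂ] K) :
    Summable fun n : ℕ => (((n + 2).factorial : ℂ))⁻¹ • T ^ n := by
  apply Summable.of_norm
  apply Summable.of_nonneg_of_le (fun n => norm_nonneg _) (e2_summand_norm_le T)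
  simpa using Real.summable_pow_div_factorial ‖T‖


lemma e2_continuous : Continuous (e2 : (K →L[ℂ] K) → (K →L[ℂ] K)) := by
  rw [continuous_iff_continuousAt]
  intro T
  set r : ℝ := ‖T‖ + 1 with hr
  have hball : Metric.closedBall (0 : K →L[ℂ] K) r ∈ 𝓝 T := by
    apply Metric.closedBall_mem_nhds_of_mem
    simp [hr]
  refine ContinuousOn.continuousAt ?_ hball
  rw [continuousOn_iff_continuous_restrict]
  have : (Metric.closedBall (0 : K →L[ℂ] K) r).domRestrict (e2 : (K →L[ℂ] K) → _)
      = fun x : Metric.closedBall (0 : K →L[ℂ] K) r =>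
        ∑' n : ℕ, (((n + 2).factorial : ℂ))⁻¹ • (x : K →L[ℂ] K) ^ n := rfl
  rw [this]
  refine continuous_tsum (u := fun n => r ^ n / n.factorial) ?_ ?_ ?_
  · intro n
    exact (((continuous_subtype_val (p := (· ∈ Metric.closedBall (0 : K →L[ℂ] K) r))).pow n).const_smul (((n + 2).factorial : ℂ))⁻¹)
  · exact Real.summable_pow_div_factorial r
  · intro n x
    refine (e2_summand_norm_le (x : K →L[ℂ] K) n).trans ?_
    have hx : ‖(x : K →L[ℂ] K)‖ ≤ r := by
      simpa [dist_eq_norm] using Metric.mem_closedBall.mp x.2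
    have hp : ‖(x : K →L[ℂ] K)‖ ^ n ≤ r ^ n := pow_le_pow_left₀ (norm_nonneg _) hx n
    have : (0:ℝ) < n.factorial := by exact_mod_cast n.factorial_pos
    exact div_le_div_of_nonneg_right hp this.le |>.trans le_rfl

set_option maxHeartbeats 1000000 in
lemma mul_e2_mul (T : K →L[ℂ] K) :
    T * e2 T * T = ∑' n : ℕ, (((n + 2).factorial : ℂ))⁻¹ • T ^ (n + 2) := by
  unfold e2
  rw [← Summable.tsum_mul_left T (e2_summable T),
    ← Summable.tsum_mul_right _ ((e2_summable T).mul_left T)]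
  congr 1
  funext n
  rw [mul_smul_comm, smul_mul_assoc, ← pow_succ', ← pow_succ]

set_option maxHeartbeats 1000000 in
lemma exp_sub_one_eq (T : K →L[ℂ] K) :
    NormedSpace.exp T - 1 = T + T * e2 T * T := by
  have hf := NormedSpace.expSeries_summable' (𝕂 := ℂ) T
  have hf1 : Summable fun n : ℕ => (((n + 1).factorial : ℂ))⁻¹ • T ^ (n + 1) :=
    (summable_nat_add_iff 1).mpr hf
  simp only [NormedSpace.exp_eq_tsum ℂ]
  have h0 : (∑' n : ℕ, ((n.factorial : ℂ))⁻¹ • T ^ n)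
      = 1 + (T + ∑' n : ℕ, (((n + 1 + 1).factorial : ℂ))⁻¹ • T ^ (n + 1 + 1)) := by
    rw [Summable.tsum_eq_zero_add hf, Summable.tsum_eq_zero_add hf1]
    norm_num
  rw [h0, mul_e2_mul, add_sub_cancel_left]


lemma proj_inv_aux {P : K →L[ℂ] K} (hP2 : P * P = P) {a b : ℂ} (hab : a * b = 1) :
    (a • (1 - P) + P) * (b • (1 - P) + P) = 1 := by
  have h1P : (1 - P) * P = 0 := by rw [sub_mul, one_mul, hP2, sub_self]
  have hP1 : P * (1 - P) = 0 := by rw [mul_sub, mul_one, hP2, sub_self]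
  have h11 : (1 - P) * (1 - P) = 1 - P := by rw [mul_sub, mul_one, h1P, sub_zero]
  simp only [add_mul, mul_add, smul_mul_assoc, mul_smul_comm, smul_smul, h1P, hP1, h11, hP2,
    smul_zero, add_zero, zero_add]
  rw [mul_comm b a, hab, one_smul, sub_add_cancel]

lemma scaleOp_mul_scaleInv (P : K →L[ℂ] K) (hP2 : P * P = P) {h : ℝ} (hh : 0 < h) :
    scaleOp P h * scaleInv P h = 1 := by
  have hs : ((Real.sqrt h : ℂ)) ≠ 0 := by
    exact_mod_cast (Real.sqrt_pos.mpr hh).ne'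
  exact proj_inv_aux hP2 (inv_mul_cancel₀ hs)

lemma scaleInv_mul_scaleOp (P : K →L[ℂ] K) (hP2 : P * P = P) {h : ℝ} (hh : 0 < h) :
    scaleInv P h * scaleOp P h = 1 := by
  have hs : ((Real.sqrt h : ℂ)) ≠ 0 := by
    exact_mod_cast (Real.sqrt_pos.mpr hh).ne'
  exact proj_inv_aux hP2 (mul_inv_cancel₀ hs)

lemma scaleInv_tendsto (P : K →L[ℂ] K) :
    Tendsto (fun h : ℝ => scaleInv P h) (𝓝[>] 0) (𝓝 P) := by
  have h1 : Tendsto (fun h : ℝ => ((Real.sqrt h : ℂ))) (𝓝[>] 0) (𝓝 0) := by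
    have : Tendsto Real.sqrt (𝓝[>] (0:ℝ)) (𝓝 0) := by
      have h := Real.continuous_sqrt.tendsto 0
      rw [Real.sqrt_zero] at h
      exact h.mono_left nhdsWithin_le_nhds
    have := (Complex.continuous_ofReal.tendsto 0).comp this
    exact this
  have : Tendsto (fun h : ℝ => ((Real.sqrt h : ℂ)) • (1 - P) + P) (𝓝[>] 0)
      (𝓝 ((0:ℂ) • (1 - P) + P)) := by
    exact (h1.smul_const _).add tendsto_const_nhds
  simpa [scaleInv] using this


lemma scal_add (P : K →L[ℂ] K) (h : ℝ) (A B : K →L[ℂ] K) :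
    scal P h (A + B) = scal P h A + scal P h B := by
  simp [scal, mul_add, add_mul]

set_option maxHeartbeats 1000000 in
lemma key_lemma (P : K →L[ℂ] K) (hP2 : P * P = P) (Q : K →L[ℂ] K) (Qh : ℝ → K →L[ℂ] K)
    (hc : Tendsto (fun h : ℝ => scal P h (Qh h)) (𝓝[>] 0) (𝓝 Q)) :
    Tendsto (fun h : ℝ => scal P h (NormedSpace.exp (Qh h) - 1)) (𝓝[>] 0)
      (𝓝 (holevo P Q)) := by
  have hpos : ∀ᶠ h : ℝ in 𝓝[>] 0, 0 < h := eventually_mem_nhdsWithin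
  have hT := scaleInv_tendsto P
  have hQ : Tendsto Qh (𝓝[>] 0) (𝓝 (P * Q * P)) := by
    refine ((hT.mul hc).mul hT).congr' ?_
    filter_upwards [hpos] with h hh
    have l1 : scaleInv P h * scaleOp P h = 1 := scaleInv_mul_scaleOp P hP2 hh
    have l2 : scaleOp P h * scaleInv P h = 1 := scaleOp_mul_scaleInv P hP2 hh
    have c1 : ∀ x : K →L[ℂ] K, scaleInv P h * (scaleOp P h * x) = x := fun x => by
      rw [← mul_assoc, l1, one_mul]
    have c2 : ∀ x : K →L[ℂ] K, scaleOp P h * (scaleInv P h * x) = x := fun x => by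
      rw [← mul_assoc, l2, one_mul]
    simp only [scal, mul_assoc, c1, c2]
    rw [l2, mul_one]
  have hE : Tendsto (fun h : ℝ => e2 (Qh h)) (𝓝[>] 0) (𝓝 (e2 (P * Q * P))) :=
    (e2_continuous.tendsto _).comp hQ
  have hmain : Tendsto (fun h : ℝ => scal P h (Qh h) +
      scal P h (Qh h) * (scaleInv P h * e2 (Qh h) * scaleInv P h) * scal P h (Qh h))
      (𝓝[>] 0) (𝓝 (Q + Q * (P * e2 (P * Q * P) * P) * Q)) :=
    hc.add ((hc.mul ((hT.mul hE).mul hT)).mul hc)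
  have hhol : Q + Q * (P * e2 (P * Q * P) * P) * Q = holevo P Q := by
    simp only [holevo, mul_assoc]
  rw [hhol] at hmain
  refine hmain.congr' ?_
  filter_upwards [hpos] with h hh
  have l1 : scaleInv P h * scaleOp P h = 1 := scaleInv_mul_scaleOp P hP2 hh
  have l2 : scaleOp P h * scaleInv P h = 1 := scaleOp_mul_scaleInv P hP2 hh
  have c1 : ∀ x : K →L[ℂ] K, scaleInv P h * (scaleOp P h * x) = x := fun x => by
    rw [← mul_assoc, l1, one_mul]
  have c2 : ∀ x : K →L[ℂ] K, scaleOp P h * (scaleInv P h * x) = x := fun x => by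
    rw [← mul_assoc, l2, one_mul]
  show scal P h (Qh h) + _ = scal P h (NormedSpace.exp (Qh h) - 1)
  rw [show scal P h (NormedSpace.exp (Qh h) - 1)
      = scal P h (Qh h + Qh h * e2 (Qh h) * Qh h) by rw [exp_sub_one_eq]]
  simp only [scal, mul_add, add_mul, mul_assoc, c1, c2]

set_option maxHeartbeats 1000000 in
lemma key_prod (P : K →L[ℂ] K) (hP2 : P * P = P) (Q₁ Q₂ : K →L[ℂ] K)
    (Q₁h Q₂h : ℝ → K →L[ℂ] K)
    (k1 : Tendsto (fun h : ℝ => scal P h (NormedSpace.exp (Q₁h h) - 1)) (𝓝[>] 0)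
      (𝓝 (holevo P Q₁)))
    (k2 : Tendsto (fun h : ℝ => scal P h (NormedSpace.exp (Q₂h h) - 1)) (𝓝[>] 0)
      (𝓝 (holevo P Q₂))) :
    Tendsto (fun h : ℝ => scal P h (NormedSpace.exp (Q₁h h) * NormedSpace.exp (Q₂h h) - 1))
      (𝓝[>] 0) (𝓝 (holevo P Q₁ + holevo P Q₂ + holevo P Q₁ * P * holevo P Q₂)) := by
  have hpos : ∀ᶠ h : ℝ in 𝓝[>] 0, 0 < h := eventually_mem_nhdsWithin
  have hT := scaleInv_tendsto P
  have hmain : Tendsto (fun h : ℝ => scal P h (NormedSpace.exp (Q₁h h) - 1) +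
      scal P h (NormedSpace.exp (Q₂h h) - 1) +
      scal P h (NormedSpace.exp (Q₁h h) - 1) * (scaleInv P h * scaleInv P h) *
        scal P h (NormedSpace.exp (Q₂h h) - 1)) (𝓝[>] 0)
      (𝓝 (holevo P Q₁ + holevo P Q₂ + holevo P Q₁ * (P * P) * holevo P Q₂)) :=
    (k1.add k2).add ((k1.mul (hT.mul hT)).mul k2)
  rw [hP2] at hmain
  refine hmain.congr' ?_
  filter_upwards [hpos] with h hh
  have l1 : scaleInv P h * scaleOp P h = 1 := scaleInv_mul_scaleOp P hP2 hh
  have l2 : scaleOp P h * scaleInv P h = 1 := scaleOp_mul_scaleInv P hP2 hh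
  have c1 : ∀ x : K →L[ℂ] K, scaleInv P h * (scaleOp P h * x) = x := fun x => by
    rw [← mul_assoc, l1, one_mul]
  have c2 : ∀ x : K →L[ℂ] K, scaleOp P h * (scaleInv P h * x) = x := fun x => by
    rw [← mul_assoc, l2, one_mul]
  have hexp : NormedSpace.exp (Q₁h h) * NormedSpace.exp (Q₂h h) - 1
      = (NormedSpace.exp (Q₁h h) - 1) + (NormedSpace.exp (Q₂h h) - 1) +
        (NormedSpace.exp (Q₁h h) - 1) * (NormedSpace.exp (Q₂h h) - 1) := by
    noncomm_ring
  rw [show scal P h (NormedSpace.exp (Q₁h h) * NormedSpace.exp (Q₂h h) - 1)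
      = scal P h ((NormedSpace.exp (Q₁h h) - 1) + (NormedSpace.exp (Q₂h h) - 1) +
        (NormedSpace.exp (Q₁h h) - 1) * (NormedSpace.exp (Q₂h h) - 1)) by rw [← hexp]]
  simp only [scal, mul_add, add_mul, mul_assoc, c1, c2]

end Aux

theorem scaled_products_of_exponentials_converge
    {K : Type*} [NormedAddCommGroup K] [InnerProductSpace ℂ K] [CompleteSpace K]
    (P : K →L[ℂ] K) (hP : IsSelfAdjoint P) (hP2 : P * P = P)
    (Q₁ Q₂ : K →L[ℂ] K) (Q₁h Q₂h : ℝ → K →L[ℂ] K)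
    (h1 : Tendsto (fun h : ℝ => ‖scal P h (Q₁h h) - Q₁‖) (𝓝[>] 0) (𝓝 0))
    (h2 : Tendsto (fun h : ℝ => ‖scal P h (Q₂h h) - Q₂‖) (𝓝[>] 0) (𝓝 0)) :
    Tendsto (fun h : ℝ =>
        ‖scal P h (NormedSpace.exp (Q₁h h + Q₂h h) - 1) - holevo P (Q₁ + Q₂)‖)
      (𝓝[>] 0) (𝓝 0) ∧
    Tendsto (fun h : ℝ =>
        ‖scal P h (NormedSpace.exp (Q₁h h) * NormedSpace.exp (Q₂h h) - 1) -
          seriesProd P (holevo P Q₁) (holevo P Q₂)‖)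
      (𝓝[>] 0) (𝓝 0) := by
  have ha : Tendsto (fun h : ℝ => scal P h (Q₁h h)) (𝓝[>] 0) (𝓝 Q₁) :=
    tendsto_iff_norm_sub_tendsto_zero.mpr h1
  have hb : Tendsto (fun h : ℝ => scal P h (Q₂h h)) (𝓝[>] 0) (𝓝 Q₂) :=
    tendsto_iff_norm_sub_tendsto_zero.mpr h2
  have hsum : Tendsto (fun h : ℝ => scal P h (Q₁h h + Q₂h h)) (𝓝[>] 0) (𝓝 (Q₁ + Q₂)) :=
    (ha.add hb).congr fun h => (scal_add P h _ _).symm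
  have k0 := key_lemma P hP2 (Q₁ + Q₂) (fun h => Q₁h h + Q₂h h) hsum
  have k1 := key_lemma P hP2 Q₁ Q₁h ha
  have k2 := key_lemma P hP2 Q₂ Q₂h hb
  have kp := key_prod P hP2 Q₁ Q₂ Q₁h Q₂h k1 k2
  refine ⟨tendsto_iff_norm_sub_tendsto_zero.mp k0, ?_⟩
  have hsp : seriesProd P (holevo P Q₁) (holevo P Q₂)
      = holevo P Q₁ + holevo P Q₂ + holevo P Q₁ * P * holevo P Q₂ := rfl
  rw [hsp]
  exact tendsto_iff_norm_sub_tendsto_zero.mp kp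
end
end
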